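/- Let n be a positive odd integer. Then σ(n) is a power of 2 if and only if n is a product of distinct Mersenne primes (equivalently, n is squarefree and every prime factor of n is a Mersenne prime). -/

import Mathlib

open Finset

private lemma sum_pow_mod_two (p k : ℕ) (hp : p % 2 = 1) :
    (∑ i ∈ Finset.range k, p ^ i) % 2 = k % 2 := by
  induction k with
  | zero => simp
  | succ k ih =>
    rw [Finset.sum_range_succ]
    have h1 : p ^ k % 2 = 1 := by simp [Nat.pow_mod, hp]
    omega

private lemma sum_pow_pair (p m : ℕ) :
    ∑ i ∈ Finset.range (2 * m), p ^ i
      = (1 + p) * ∑ j ∈ Finset.range m, (p ^ 2) ^ j := by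
  induction m with
  | zero => simp
  | succ m ih =>
    have h2 : 2 * (m + 1) = (2 * m + 1) + 1 := by ring
    rw [h2, Finset.sum_range_succ, Finset.sum_range_succ, ih, Finset.sum_range_succ]
    ring

private lemma key_lemma (p a k : ℕ) (hp : p.Prime) (hodd : p % 2 = 1) (hk : 0 < k)
    (h : ∑ i ∈ Finset.range (k + 1), p ^ i = 2 ^ a) : k = 1 ∧ p = 2 ^ a - 1 := by
  have hp3 : 3 ≤ p := by
    have := hp.two_le; omega
  have hge : 1 + p ≤ ∑ i ∈ Finset.range (k + 1), p ^ i := by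
    have hsub : Finset.range 2 ⊆ Finset.range (k + 1) := by
      apply Finset.range_subset_range.mpr; omega
    calc 1 + p = ∑ i ∈ Finset.range 2, p ^ i := by simp [Finset.sum_range_succ]
    _ ≤ _ := Finset.sum_le_sum_of_subset hsub
  have ha1 : 1 ≤ a := by
    by_contra hcon
    have haa : a = 0 := by omega
    rw [haa, pow_zero] at h; omega
  have hpar : (k + 1) % 2 = 0 := by
    have h1 := sum_pow_mod_two p (k + 1) hodd
    rw [h] at h1
    have h2 : 2 ^ a % 2 = 0 := by
      have : (2 : ℕ) ∣ 2 ^ a := dvd_pow_self 2 (by omega)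
      omega
    omega
  obtain ⟨m, hm⟩ : ∃ m, k + 1 = 2 * m := ⟨(k + 1) / 2, by omega⟩
  have hm1 : 1 ≤ m := by omega
  rw [hm, sum_pow_pair] at h
  rcases Nat.lt_or_ge m 2 with hm2 | hm2
  · -- m = 1
    have hmeq : m = 1 := by omega
    subst hmeq
    rw [Finset.sum_range_one, pow_zero, mul_one] at h
    have hx : 1 ≤ 2 ^ a := Nat.one_le_two_pow
    exact ⟨by omega, by omega⟩
  · -- m ≥ 2: contradiction
    exfalso
    have hTdvd : (∑ j ∈ Finset.range m, (p ^ 2) ^ j) ∣ 2 ^ a :=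
      ⟨1 + p, by rw [← h]; ring⟩
    obtain ⟨b, hba, hb⟩ := (Nat.dvd_prime_pow Nat.prime_two).mp hTdvd
    have hTge : 1 + p ^ 2 ≤ ∑ j ∈ Finset.range m, (p ^ 2) ^ j := by
      have hsub : Finset.range 2 ⊆ Finset.range m := by
        apply Finset.range_subset_range.mpr; omega
      calc 1 + p ^ 2 = ∑ j ∈ Finset.range 2, (p ^ 2) ^ j := by simp [Finset.sum_range_succ]
      _ ≤ _ := Finset.sum_le_sum_of_subset hsub
    have hp9 : 9 ≤ p ^ 2 := by nlinarith
    have hpsq : p ^ 2 % 2 = 1 := by simp [Nat.pow_mod, hodd]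
    have hb1 : 1 ≤ b := by
      by_contra hcon
      have hbb : b = 0 := by omega
      rw [hbb, pow_zero] at hb
      omega
    have hTeven : (∑ j ∈ Finset.range m, (p ^ 2) ^ j) % 2 = 0 := by
      have : (2 : ℕ) ∣ 2 ^ b := dvd_pow_self 2 (by omega)
      omega
    have hmpar : m % 2 = 0 := by
      have h1 := sum_pow_mod_two (p ^ 2) m hpsq
      omega
    obtain ⟨l, hl⟩ : ∃ l, m = 2 * l := ⟨m / 2, by omega⟩
    rw [hl, sum_pow_pair] at hb
    have hdvd2 : (1 + p ^ 2) ∣ 2 ^ a := by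
      refine dvd_trans ⟨_, hb.symm⟩ (pow_dvd_pow 2 hba)
    obtain ⟨c, _, hc⟩ := (Nat.dvd_prime_pow Nat.prime_two).mp hdvd2
    have hc2 : 2 ≤ c := by
      by_contra hcon
      have hcc : c ≤ 1 := by omega
      have h2c : 2 ^ c ≤ 2 ^ 1 := Nat.pow_le_pow_right (by omega) hcc
      omega
    have h4 : (4 : ℕ) ∣ 2 ^ c := by
      have : (2 : ℕ) ^ 2 ∣ 2 ^ c := pow_dvd_pow 2 hc2
      simpa using this
    obtain ⟨t, ht⟩ : ∃ t, p = 2 * t + 1 := ⟨p / 2, by omega⟩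
    have hform : 1 + p ^ 2 = 4 * (t * t + t) + 2 := by rw [ht]; ring
    omega

theorem stmt3 (n : ℕ) (hn : 0 < n) (hodd : Odd n) :
    (∃ m : ℕ, ArithmeticFunction.sigma 1 n = 2 ^ m) ↔
      (Squarefree n ∧ ∀ q ∈ n.primeFactors, ∃ r : ℕ, q = 2 ^ r - 1) := by
  induction n using Nat.recOnPosPrimePosCoprime with
  | zero => exact absurd hn (by omega)
  | one =>
    constructor
    · intro _
      exact ⟨squarefree_one, by simp⟩
    · intro _
      exact ⟨0, by simp [ArithmeticFunction.sigma_one_apply]⟩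
  | prime_pow p k hp hk =>
    have hpp : p.Prime := hp
    have hpodd : p % 2 = 1 := by
      rcases Nat.even_or_odd p with he | ho
      · exfalso
        have h2p : 2 ∣ p ^ k := dvd_pow he.two_dvd (by omega)
        have := Nat.odd_iff.mp hodd
        omega
      · exact Nat.odd_iff.mp ho
    constructor
    · rintro ⟨m, hm⟩
      rw [ArithmeticFunction.sigma_one_apply_prime_pow hpp] at hm
      obtain ⟨hk1, hpm⟩ := key_lemma p m k hpp hpodd hk hm
      rw [hk1, pow_one]
      refine ⟨hpp.squarefree, ?_⟩
      intro q hq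
      rw [Nat.Prime.primeFactors hpp, Finset.mem_singleton] at hq
      exact ⟨m, hq ▸ hpm⟩
    · rintro ⟨hsf, hq⟩
      have hk1 : k = 1 := by
        by_contra hcon
        have hk2 : 2 ≤ k := by omega
        have hdvd : p * p ∣ p ^ k := by
          have : p ^ 2 ∣ p ^ k := pow_dvd_pow p hk2
          simpa [sq] using this
        exact hpp.not_isUnit (hsf p hdvd)
      obtain ⟨r, hr⟩ := hq p (by
        rw [hk1, pow_one, Nat.Prime.primeFactors hpp]
        exact Finset.mem_singleton_self p)
      refine ⟨r, ?_⟩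
      rw [ArithmeticFunction.sigma_one_apply_prime_pow hpp, hk1]
      have h1 : 1 ≤ 2 ^ r := Nat.one_le_two_pow
      rw [Finset.sum_range_succ, Finset.sum_range_one, pow_zero, pow_one]
      omega
  | coprime a b ha hb hab iha ihb =>
    have ha0 : 0 < a := by omega
    have hb0 : 0 < b := by omega
    have hoab : Odd a ∧ Odd b := by
      rw [Nat.odd_mul] at hodd; exact hodd
    have hσ : ArithmeticFunction.sigma 1 (a * b)
        = ArithmeticFunction.sigma 1 a * ArithmeticFunction.sigma 1 b :=
      ArithmeticFunction.isMultiplicative_sigma.map_mul_of_coprime hab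
    have hpf : (a * b).primeFactors = a.primeFactors ∪ b.primeFactors :=
      Nat.primeFactors_mul (by omega) (by omega)
    constructor
    · rintro ⟨m, hm⟩
      rw [hσ] at hm
      have hda : ArithmeticFunction.sigma 1 a ∣ 2 ^ m := ⟨_, hm.symm⟩
      have hdb : ArithmeticFunction.sigma 1 b ∣ 2 ^ m :=
        ⟨ArithmeticFunction.sigma 1 a, by rw [← hm]; ring⟩
      obtain ⟨i, _, hi⟩ := (Nat.dvd_prime_pow Nat.prime_two).mp hda
      obtain ⟨j, _, hj⟩ := (Nat.dvd_prime_pow Nat.prime_two).mp hdb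
      obtain ⟨hsa, hqa⟩ := (iha ha0 hoab.1).mp ⟨i, hi⟩
      obtain ⟨hsb, hqb⟩ := (ihb hb0 hoab.2).mp ⟨j, hj⟩
      refine ⟨(Nat.squarefree_mul hab).mpr ⟨hsa, hsb⟩, ?_⟩
      intro q hq
      rw [hpf, Finset.mem_union] at hq
      rcases hq with hq | hq
      · exact hqa q hq
      · exact hqb q hq
    · rintro ⟨hsf, hq⟩
      have hsab := (Nat.squarefree_mul hab).mp hsf
      obtain ⟨i, hi⟩ := (iha ha0 hoab.1).mpr ⟨hsab.1, fun q hqm =>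
        hq q (by rw [hpf]; exact Finset.mem_union_left _ hqm)⟩
      obtain ⟨j, hj⟩ := (ihb hb0 hoab.2).mpr ⟨hsab.2, fun q hqm =>
        hq q (by rw [hpf]; exact Finset.mem_union_right _ hqm)⟩
      exact ⟨i + j, by rw [hσ, hi, hj, pow_add]⟩
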